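/- MAX SMTI-1TM admits a woman-strategy-proof 2-approximate-stable mechanism: there exists a mechanism S on SMTI-1TM instances such that for every instance I, S(I) is a stable matching with 2·|S(I)| ≥ |M_opt| for every stable matching M_opt of I, and no woman can, by submitting a falsified preference list while all other lists are unchanged, obtain an outcome she prefers with respect to her true list. -/

import Mathlib

/-- An instance of the stable marriage problem with ties and incomplete lists (SMTI),
with men of type `α` and women of type `β`.  Each person's preference list is
represented by a rank function: `mpref m w = none` means woman `w` is unacceptable
to man `m`, and `mpref m w = some r` means `w` is acceptable with rank `r`
(smaller rank = more preferred; equal ranks = a tie).  This encodes exactly a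
total preorder on the set of acceptable partners. -/
structure SMInst (α β : Type) where
  mpref : α → β → Option ℕ
  wpref : β → α → Option ℕ

namespace SMInst

variable {α β : Type}

/-- Woman `w` is acceptable to man `m`. -/
def mAcc (I : SMInst α β) (m : α) (w : β) : Prop := (I.mpref m w).isSome

/-- Man `m` is acceptable to woman `w`. -/
def wAcc (I : SMInst α β) (w : β) (m : α) : Prop := (I.wpref w m).isSome

/-- Man `m` strictly prefers woman `w` to woman `w'`. -/
def mPref (I : SMInst α β) (m : α) (w w' : β) : Prop :=
  ∃ r r', I.mpref m w = some r ∧ I.mpref m w' = some r' ∧ r < r'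

/-- Woman `w` strictly prefers man `m` to man `m'`. -/
def wPref (I : SMInst α β) (w : β) (m m' : α) : Prop :=
  ∃ r r', I.wpref w m = some r ∧ I.wpref w m' = some r' ∧ r < r'

/-- `M` is a matching of `I`: all pairs mutually acceptable and no person in two pairs. -/
def IsMatching (I : SMInst α β) (M : Finset (α × β)) : Prop :=
  (∀ p ∈ M, I.mAcc p.1 p.2 ∧ I.wAcc p.2 p.1) ∧
  (∀ p ∈ M, ∀ q ∈ M, p.1 = q.1 → p = q) ∧
  (∀ p ∈ M, ∀ q ∈ M, p.2 = q.2 → p = q)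

/-- Man `m` is single (unmatched) in `M`. -/
def mSingle (M : Finset (α × β)) (m : α) : Prop := ∀ w, (m, w) ∉ M

/-- Woman `w` is single (unmatched) in `M`. -/
def wSingle (M : Finset (α × β)) (w : β) : Prop := ∀ m, (m, w) ∉ M

/-- `(m, w)` blocks `M` in instance `I`. -/
def Blocks (I : SMInst α β) (M : Finset (α × β)) (m : α) (w : β) : Prop :=
  I.mAcc m w ∧ I.wAcc w m ∧
  (mSingle M m ∨ ∃ w', (m, w') ∈ M ∧ I.mPref m w w') ∧
  (wSingle M w ∨ ∃ m', (m', w) ∈ M ∧ I.wPref w m m')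

/-- `M` is a (weakly) stable matching of `I`. -/
def IsStable (I : SMInst α β) (M : Finset (α × β)) : Prop :=
  I.IsMatching M ∧ ∀ m w, ¬ I.Blocks M m w

/-- Man `m` prefers matching `M'` to matching `M`, with respect to his list in `I`:
he is matched in `M'` to an acceptable partner, and he is either single in `M`
or strictly prefers his `M'`-partner to his `M`-partner. -/
def mPrefMatching (I : SMInst α β) (m : α) (M' M : Finset (α × β)) : Prop :=
  ∃ w, (m, w) ∈ M' ∧ I.mAcc m w ∧
    (mSingle M m ∨ ∃ w', (m, w') ∈ M ∧ I.mPref m w w')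

/-- Woman `w` prefers matching `M'` to matching `M`, with respect to her list in `I`. -/
def wPrefMatching (I : SMInst α β) (w : β) (M' M : Finset (α × β)) : Prop :=
  ∃ m, (m, w) ∈ M' ∧ I.wAcc w m ∧
    (wSingle M w ∨ ∃ m', (m', w) ∈ M ∧ I.wPref w m m')

/-- `I` and `I'` differ only in man `m`'s preference list. -/
def mDiffOnly (I I' : SMInst α β) (m : α) : Prop :=
  I.wpref = I'.wpref ∧ ∀ m', m' ≠ m → I.mpref m' = I'.mpref m'

/-- `I` and `I'` differ only in woman `w`'s preference list. -/
def wDiffOnly (I I' : SMInst α β) (w : β) : Prop :=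
  I.mpref = I'.mpref ∧ ∀ w', w' ≠ w → I.wpref w' = I'.wpref w'

/-- Men's lists contain no ties. -/
def MStrict (I : SMInst α β) : Prop :=
  ∀ m w w', I.mpref m w = I.mpref m w' → I.mAcc m w → w = w'

/-- Women's lists contain no ties. -/
def WStrict (I : SMInst α β) : Prop :=
  ∀ w m m', I.wpref w m = I.wpref w m' → I.wAcc w m → m = m'

/-- `I` is an SMI instance: no ties at all (all lists strictly ordered). -/
def NoTies (I : SMInst α β) : Prop := I.MStrict ∧ I.WStrict

/-- `I` is an SMTI-1TM instance: ties may occur only in men's lists,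
i.e. women's lists are strictly ordered. -/
def OneTM (I : SMInst α β) : Prop := I.WStrict

/-- `I'` is obtained from `I` by breaking ties: same acceptable sets, and every
strict preference of `I` is preserved in `I'` (so each person's list in `I'` is a
linear extension of the corresponding total preorder in `I`). -/
def Refines (I I' : SMInst α β) : Prop :=
  (∀ m w, I.mAcc m w ↔ I'.mAcc m w) ∧
  (∀ w m, I.wAcc w m ↔ I'.wAcc w m) ∧
  (∀ m w w', I.mPref m w w' → I'.mPref m w w') ∧
  (∀ w m m', I.wPref w m m' → I'.wPref w m m')

end SMInst

namespace DAproof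

open SMInst Finset

variable {n : ℕ}

open Classical in
/-- The proposal of woman `w` with cutoff `c`: her most preferred man of rank `≥ c`. -/
noncomputable def propc (J : SMInst (Fin n) (Fin n)) (w : Fin n) (c : ℕ) :
    Option (Fin n) :=
  if h : ∃ r, c ≤ r ∧ ∃ m, J.wpref w m = some r then
    some (Nat.find_spec h).2.choose
  else none

lemma propc_some {J : SMInst (Fin n) (Fin n)} {w : Fin n} {c : ℕ} {m : Fin n}
    (h : propc J w c = some m) :
    ∃ r, J.wpref w m = some r ∧ c ≤ r ∧
      ∀ m' r', J.wpref w m' = some r' → c ≤ r' → r ≤ r' := by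
  classical
  unfold propc at h
  split_ifs at h with hex
  · obtain ⟨hc, hm⟩ := Nat.find_spec hex
    have hch := hm.choose_spec
    injection h with h'
    subst h'
    refine ⟨Nat.find hex, hch, hc, fun m' r' hr' hcr' => ?_⟩
    exact Nat.find_min' hex ⟨hcr', m', hr'⟩

lemma propc_none {J : SMInst (Fin n) (Fin n)} {w : Fin n} {c : ℕ}
    (h : propc J w c = none) :
    ∀ m r, J.wpref w m = some r → r < c := by
  classical
  unfold propc at h
  split_ifs at h with hex
  push_neg at hex
  intro m r hr
  by_contra hlt
  push_neg at hlt
  exact (hex r hlt) m hr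

lemma propc_isSome {J : SMInst (Fin n) (Fin n)} {w : Fin n} {c : ℕ} {m : Fin n} {r : ℕ}
    (hr : J.wpref w m = some r) (hc : c ≤ r) : ∃ m', propc J w c = some m' := by
  classical
  unfold propc
  rw [dif_pos ⟨r, hc, m, hr⟩]
  exact ⟨_, rfl⟩

/-- Rejection condition: woman `w`'s current proposal is rejected. -/
def Rej (J : SMInst (Fin n) (Fin n)) (σ : Fin n → ℕ) (w : Fin n) : Prop :=
  ∃ r m, propc J w (σ w) = some m ∧ J.wpref w m = some r ∧
    (¬ J.mAcc m w ∨ ∃ w', propc J w' (σ w') = some m ∧ J.mPref m w' w)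

open Classical in
noncomputable def step (J : SMInst (Fin n) (Fin n)) (σ : Fin n → ℕ) : Fin n → ℕ :=
  fun w =>
    if h : ∃ r, ∃ m, propc J w (σ w) = some m ∧ J.wpref w m = some r ∧
      (¬ J.mAcc m w ∨ ∃ w', propc J w' (σ w') = some m ∧ J.mPref m w' w) then
      h.choose + 1
    else σ w

lemma step_eq_of_not {J : SMInst (Fin n) (Fin n)} {σ : Fin n → ℕ} {w : Fin n}
    (h : ¬ Rej J σ w) : step J σ w = σ w := by
  classical
  have h' : ¬ ∃ r m, propc J w (σ w) = some m ∧ J.wpref w m = some r ∧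
      (¬ J.mAcc m w ∨ ∃ w', propc J w' (σ w') = some m ∧ J.mPref m w' w) := h
  unfold step
  rw [dif_neg h']

lemma step_spec {J : SMInst (Fin n) (Fin n)} {σ : Fin n → ℕ} {w : Fin n}
    (h : Rej J σ w) :
    ∃ r m, propc J w (σ w) = some m ∧ J.wpref w m = some r ∧
      (¬ J.mAcc m w ∨ ∃ w', propc J w' (σ w') = some m ∧ J.mPref m w' w) ∧
      step J σ w = r + 1 := by
  classical
  have h' : ∃ r m, propc J w (σ w) = some m ∧ J.wpref w m = some r ∧
      (¬ J.mAcc m w ∨ ∃ w', propc J w' (σ w') = some m ∧ J.mPref m w' w) := h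
  unfold step
  rw [dif_pos h']
  obtain ⟨m, h1, h2, h3⟩ := h'.choose_spec
  exact ⟨h'.choose, m, h1, h2, h3, rfl⟩

lemma step_changed {J : SMInst (Fin n) (Fin n)} {σ : Fin n → ℕ} {w : Fin n}
    (h : step J σ w ≠ σ w) :
    ∃ r m, propc J w (σ w) = some m ∧ J.wpref w m = some r ∧
      (¬ J.mAcc m w ∨ ∃ w', propc J w' (σ w') = some m ∧ J.mPref m w' w) ∧
      step J σ w = r + 1 := by
  by_cases hr : Rej J σ w
  · exact step_spec hr
  · exact absurd (step_eq_of_not hr) h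

lemma le_step {J : SMInst (Fin n) (Fin n)} (σ : Fin n → ℕ) (w : Fin n) :
    σ w ≤ step J σ w := by
  by_cases hr : Rej J σ w
  · obtain ⟨r, m, hp, hw, _, he⟩ := step_spec hr
    obtain ⟨r0, hr0, hc0, _⟩ := propc_some hp
    rw [hr0] at hw
    injection hw with hw
    subst hw
    rw [he]
    exact hc0.trans (Nat.le_succ _)
  · rw [step_eq_of_not hr]

/-- The run of the women-proposing deferred-acceptance algorithm. -/
noncomputable def st (J : SMInst (Fin n) (Fin n)) (t : ℕ) : Fin n → ℕ :=
  (step J)^[t] (fun _ => 0)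

lemma st_succ (J : SMInst (Fin n) (Fin n)) (t : ℕ) :
    st J (t + 1) = step J (st J t) := Function.iterate_succ_apply' _ _ _

lemma st_mono (J : SMInst (Fin n) (Fin n)) {s t : ℕ} (h : s ≤ t) (w : Fin n) :
    st J s w ≤ st J t w := by
  induction t with
  | zero => simp_all
  | succ t ih =>
    rcases Nat.lt_or_ge s (t+1) with h' | h'
    · exact (ih (Nat.lt_succ_iff.mp h')).trans (by rw [st_succ]; exact le_step _ _)
    · have : s = t + 1 := le_antisymm h h'
      subst this; rfl

/-- measure for termination -/
noncomputable def msr (J : SMInst (Fin n) (Fin n)) (σ : Fin n → ℕ) : ℕ :=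
  ∑ w : Fin n, (univ.filter (fun m => ∃ r, J.wpref w m = some r ∧ σ w ≤ r)).card

lemma msr_anti {J : SMInst (Fin n) (Fin n)} {σ σ' : Fin n → ℕ}
    (h : ∀ w, σ w ≤ σ' w) (w : Fin n) :
    (univ.filter (fun m => ∃ r, J.wpref w m = some r ∧ σ' w ≤ r)).card ≤
    (univ.filter (fun m => ∃ r, J.wpref w m = some r ∧ σ w ≤ r)).card := by
  apply card_le_card
  intro m hm
  simp only [mem_filter, mem_univ, true_and] at hm ⊢
  obtain ⟨r, hr, hc⟩ := hm
  exact ⟨r, hr, (h w).trans hc⟩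

lemma msr_step_lt {J : SMInst (Fin n) (Fin n)} {σ : Fin n → ℕ}
    (h : step J σ ≠ σ) : msr J (step J σ) < msr J σ := by
  have hx : ∃ w, step J σ w ≠ σ w := by
    by_contra hc; push_neg at hc; exact h (funext hc)
  obtain ⟨w0, hw0⟩ := hx
  obtain ⟨r, m, hp, hw, _, he⟩ := step_changed hw0
  apply Finset.sum_lt_sum (fun w _ => msr_anti (fun w => le_step σ w) w)
  refine ⟨w0, mem_univ _, ?_⟩
  apply card_lt_card
  constructor
  · intro m' hm'
    simp only [mem_filter, mem_univ, true_and] at hm' ⊢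
    obtain ⟨r', hr', hc⟩ := hm'
    exact ⟨r', hr', (le_step σ w0).trans hc⟩
  · intro hsub
    obtain ⟨r0, hr0, hc0, _⟩ := propc_some hp
    rw [hr0] at hw; injection hw with hw; subst hw
    have hmem : m ∈ univ.filter (fun m => ∃ r, J.wpref w0 m = some r ∧ σ w0 ≤ r) := by
      simp only [mem_filter, mem_univ, true_and]; exact ⟨r0, hr0, hc0⟩
    have := hsub hmem
    simp only [mem_filter, mem_univ, true_and] at this
    obtain ⟨r', hr', hc'⟩ := this
    rw [hr0] at hr'; injection hr' with hr'; subst hr'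
    rw [he] at hc'
    omega

lemma msr_le (J : SMInst (Fin n) (Fin n)) (σ : Fin n → ℕ) : msr J σ ≤ n * n := by
  have : ∀ w : Fin n,
      (univ.filter (fun m => ∃ r, J.wpref w m = some r ∧ σ w ≤ r)).card ≤ n := by
    intro w
    calc _ ≤ (univ : Finset (Fin n)).card := card_le_card (filter_subset _ _)
    _ = n := card_univ.trans (Fintype.card_fin n)
  calc msr J σ ≤ ∑ _w : Fin n, n := Finset.sum_le_sum (fun w _ => this w)
  _ = n * n := by simp [mul_comm]

/-- The final (fixpoint) state of the run. -/
noncomputable def final (J : SMInst (Fin n) (Fin n)) : Fin n → ℕ := st J (n * n)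

lemma final_fix (J : SMInst (Fin n) (Fin n)) : step J (final J) = final J := by
  by_contra hne
  -- if never fixed up to n*n, measure decreases each step
  have hall : ∀ t ≤ n * n, step J (st J t) ≠ st J t := by
    intro t ht hfix
    have hiter : ∀ k, st J (t + k) = st J t := by
      intro k; induction k with
      | zero => rfl
      | succ k ih => rw [show t + (k+1) = (t+k)+1 from rfl, st_succ, ih, hfix]
    have : st J (n * n) = st J t := by
      have := hiter (n * n - t); rwa [Nat.add_sub_cancel' ht] at this
    exact hne (by unfold final; rw [this, hfix])
  have hdec : ∀ t ≤ n * n, msr J (st J t) + t ≤ n * n := by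
    intro t ht
    induction t with
    | zero => simpa using msr_le J (st J 0)
    | succ t ih =>
      have h1 : msr J (st J t) + t ≤ n * n := ih (Nat.le_of_succ_le ht)
      have h2 : msr J (st J (t + 1)) < msr J (st J t) := by
        rw [st_succ]; exact msr_step_lt (hall t (Nat.le_of_succ_le ht))
      omega
  have hzero : msr J (st J (n * n)) = 0 := by
    have := hdec (n * n) le_rfl; omega
  -- but a step changes some cutoff, giving a nonempty candidate set
  have hx : ∃ w, step J (st J (n * n)) w ≠ st J (n * n) w := by
    by_contra hc; push_neg at hc
    exact hall (n * n) le_rfl (funext hc)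
  obtain ⟨w0, hw0⟩ := hx
  obtain ⟨r, m, hp, hw, _, _⟩ := step_changed hw0
  obtain ⟨r0, hr0, hc0, _⟩ := propc_some hp
  have hmem : m ∈ univ.filter (fun m => ∃ r, J.wpref w0 m = some r ∧ st J (n*n) w0 ≤ r) := by
    simp only [mem_filter, mem_univ, true_and]; exact ⟨r0, hr0, hc0⟩
  have : (univ.filter (fun m => ∃ r, J.wpref w0 m = some r ∧ st J (n*n) w0 ≤ r)).card ≠ 0 :=
    Finset.card_ne_zero_of_mem hmem
  have : msr J (st J (n * n)) ≠ 0 := by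
    unfold msr
    intro hs
    rw [Finset.sum_eq_zero_iff] at hs
    exact this (hs w0 (mem_univ _))
  exact this hzero

lemma st_le_final (J : SMInst (Fin n) (Fin n)) (t : ℕ) (w : Fin n) :
    st J t w ≤ final J w := by
  rcases le_or_gt t (n * n) with h | h
  · exact st_mono J h w
  · have : ∀ k, st J (n * n + k) = final J := by
      intro k; induction k with
      | zero => rfl
      | succ k ih => rw [show n*n + (k+1) = (n*n+k)+1 from rfl, st_succ, ih, final_fix]
    have := this (t - n * n)
    rw [Nat.add_sub_cancel' h.le] at this
    rw [this]

lemma final_no_rej (J : SMInst (Fin n) (Fin n)) (w : Fin n) :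
    ¬ Rej J (final J) w := by
  intro hr
  obtain ⟨r, m, hp, hw, _, he⟩ := step_spec hr
  have h1 := congrFun (final_fix J) w
  obtain ⟨r0, hr0, hc0, _⟩ := propc_some hp
  rw [hr0] at hw; injection hw with hw; subst hw
  omega

/-- The matching produced. -/
noncomputable def DA (J : SMInst (Fin n) (Fin n)) : Finset (Fin n × Fin n) :=
  univ.filter (fun p => propc J p.2 (final J p.2) = some p.1)

lemma mem_DA {J : SMInst (Fin n) (Fin n)} {m w : Fin n} :
    (m, w) ∈ DA J ↔ propc J w (final J w) = some m := by
  unfold DA; simp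

section Helpers
variable {J : SMInst (Fin n) (Fin n)}

lemma wAcc_rank {w m : Fin n} (h : J.wAcc w m) : ∃ r, J.wpref w m = some r :=
  Option.isSome_iff_exists.mp h

lemma mAcc_rank {m w : Fin n} (h : J.mAcc m w) : ∃ r, J.mpref m w = some r :=
  Option.isSome_iff_exists.mp h

lemma wAcc_of_rank {w m : Fin n} {r : ℕ} (h : J.wpref w m = some r) : J.wAcc w m := by
  show (J.wpref w m).isSome ; rw [h]; rfl

lemma mAcc_of_rank {m w : Fin n} {r : ℕ} (h : J.mpref m w = some r) : J.mAcc m w := by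
  show (J.mpref m w).isSome ; rw [h]; rfl

lemma wrank_ne (hW : J.WStrict) {w m m' : Fin n} {a b : ℕ}
    (h1 : J.wpref w m = some a) (h2 : J.wpref w m' = some b) (hne : m ≠ m') : a ≠ b := by
  intro he
  exact hne (hW w m m' (by rw [h1, h2, he]) (wAcc_of_rank h1))

lemma mrank_ne (hM : J.MStrict) {m : Fin n} {w w' : Fin n} {a b : ℕ}
    (h1 : J.mpref m w = some a) (h2 : J.mpref m w' = some b) (hne : w ≠ w') : a ≠ b := by
  intro he
  exact hne (hM m w w' (by rw [h1, h2, he]) (mAcc_of_rank h1))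

lemma mPref_trans {m : Fin n} {w1 w2 w3 : Fin n}
    (h1 : J.mPref m w1 w2) (h2 : J.mPref m w2 w3) : J.mPref m w1 w3 := by
  obtain ⟨a, b, ha, hb, hab⟩ := h1
  obtain ⟨b', c, hb', hc, hbc⟩ := h2
  rw [hb] at hb'; injection hb' with h'
  exact ⟨a, c, ha, hc, by omega⟩

lemma mPref_asymm {m : Fin n} {w1 w2 : Fin n}
    (h1 : J.mPref m w1 w2) (h2 : J.mPref m w2 w1) : False := by
  obtain ⟨a, b, ha, hb, hab⟩ := h1
  obtain ⟨b', a', hb', ha', hba⟩ := h2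
  rw [hb] at hb'; injection hb' with h1'
  rw [ha] at ha'; injection ha' with h2'
  omega

lemma mPref_irrefl {m : Fin n} {w : Fin n} (h : J.mPref m w w) : False := by
  obtain ⟨a, b, ha, hb, hab⟩ := h
  rw [ha] at hb; injection hb with h'; omega

lemma mAcc_of_mPref {m : Fin n} {w1 w2 : Fin n} (h : J.mPref m w1 w2) : J.mAcc m w1 := by
  obtain ⟨a, _, ha, _, _⟩ := h; exact mAcc_of_rank ha

end Helpers

section Fixpoint
variable {J : SMInst (Fin n) (Fin n)}

lemma fix_no_better {w m : Fin n} (h : propc J w (final J w) = some m) :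
    J.mAcc m w ∧ ∀ w', propc J w' (final J w') = some m → ¬ J.mPref m w' w := by
  have hnr := final_no_rej J w
  obtain ⟨r, hr, _, _⟩ := propc_some h
  constructor
  · by_contra hacc; exact hnr ⟨r, m, h, hr, Or.inl hacc⟩
  · intro w' hp hpref; exact hnr ⟨r, m, h, hr, Or.inr ⟨w', hp, hpref⟩⟩

lemma proposer_unique (hM : J.MStrict) {w w' m : Fin n}
    (h : propc J w (final J w) = some m) (h' : propc J w' (final J w') = some m) :
    w = w' := by
  by_contra hne
  obtain ⟨a, ha⟩ := mAcc_rank (fix_no_better h).1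
  obtain ⟨b, hb⟩ := mAcc_rank (fix_no_better h').1
  have hab : a ≠ b := mrank_ne hM ha hb hne
  rcases lt_or_gt_of_ne hab with hlt | hgt
  · exact (fix_no_better h').2 w h ⟨a, b, ha, hb, hlt⟩
  · exact (fix_no_better h).2 w' h' ⟨b, a, hb, ha, hgt⟩

lemma DA_isMatching (hM : J.MStrict) : J.IsMatching (DA J) := by
  refine ⟨?_, ?_, ?_⟩
  · rintro ⟨m, w⟩ hp
    rw [mem_DA] at hp
    refine ⟨(fix_no_better hp).1, ?_⟩
    obtain ⟨r, hr, _, _⟩ := propc_some hp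
    exact wAcc_of_rank hr
  · rintro ⟨m, w⟩ hp ⟨m', w'⟩ hq h1
    rw [mem_DA] at hp hq
    simp only at h1
    subst h1
    have := proposer_unique hM hp hq
    simp [this]
  · rintro ⟨m, w⟩ hp ⟨m', w'⟩ hq h2
    rw [mem_DA] at hp hq
    simp only at h2
    subst h2
    rw [hp] at hq
    injection hq with h
    simp [h]

end Fixpoint

section Invariants
variable {J : SMInst (Fin n) (Fin n)}

/-- the best current proposer of `m` persists to the next round. -/
lemma best_step (hM : J.MStrict) (t : ℕ) (m : Fin n)
    (h : ∃ w, propc J w (st J t w) = some m ∧ J.mAcc m w) :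
    ∃ b, propc J b (st J t b) = some m ∧ propc J b (st J (t+1) b) = some m ∧
      J.mAcc m b ∧
      ∀ w, propc J w (st J t w) = some m → J.mAcc m w → w = b ∨ J.mPref m b w := by
  classical
  set s := univ.filter (fun w => propc J w (st J t w) = some m ∧ J.mAcc m w) with hs
  have hsne : s.Nonempty := by
    obtain ⟨w, hw1, hw2⟩ := h
    exact ⟨w, by simp [hs, hw1, hw2]⟩
  obtain ⟨b, hbs, hbmin⟩ := Finset.exists_min_image s (fun w => (J.mpref m w).getD 0) hsne
  simp only [hs, mem_filter, mem_univ, true_and] at hbs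
  obtain ⟨hb1, hb2⟩ := hbs
  obtain ⟨rb, hrb⟩ := mAcc_rank hb2
  have hmax : ∀ w, propc J w (st J t w) = some m → J.mAcc m w → w = b ∨ J.mPref m b w := by
    intro w hw hwacc
    by_cases hwb : w = b
    · exact Or.inl hwb
    · obtain ⟨rw, hrw⟩ := mAcc_rank hwacc
      have hle : (J.mpref m b).getD 0 ≤ (J.mpref m w).getD 0 :=
        hbmin w (by simp [hs, hw, hwacc])
      rw [hrb, hrw] at hle
      simp only [Option.getD_some] at hle
      have : rb ≠ rw := mrank_ne hM hrb hrw (Ne.symm hwb)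
      exact Or.inr ⟨rb, rw, hrb, hrw, by omega⟩
  have hnr : ¬ Rej J (st J t) b := by
    rintro ⟨r, m0, hp, hwr, hcause⟩
    rw [hb1] at hp; injection hp with hp; subst hp
    rcases hcause with hacc | ⟨w', hp', hpref⟩
    · exact hacc hb2
    · rcases hmax w' hp' (mAcc_of_mPref hpref) with he | hp2
      · subst he; exact mPref_irrefl hpref
      · exact mPref_asymm hp2 hpref
  have hstep : st J (t+1) b = st J t b := by
    rw [st_succ]; exact step_eq_of_not hnr
  exact ⟨b, hb1, by rw [hstep]; exact hb1, hb2, hmax⟩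

/-- Invariant B: any acceptable man passed over by a woman currently holds a
proposal from a woman he strictly prefers. -/
lemma invB (hM : J.MStrict) (hW : J.WStrict) (t : ℕ) :
    ∀ w m r, J.wpref w m = some r → r < st J t w → J.mAcc m w →
      ∃ w', propc J w' (st J t w') = some m ∧ J.mPref m w' w := by
  induction t with
  | zero => intro w m r _ h _; simp [st] at h
  | succ t ih =>
    intro w m r hr hlt hacc
    have key : ∃ w'', propc J w'' (st J t w'') = some m ∧ J.mPref m w'' w := by
      rcases lt_or_ge r (st J t w) with hcase | hcase
      · exact ih w m r hr hcase hacc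
      · have hch : st J (t+1) w ≠ st J t w := by omega
        rw [st_succ] at hch
        obtain ⟨r0, m0, hp, hw0, hcause, he⟩ := step_changed hch
        obtain ⟨r1, hr1, hc1, hmin⟩ := propc_some hp
        rw [hr1] at hw0; injection hw0 with h'; subst h'
        have hlt' : r < r1 + 1 := by rw [st_succ, he] at hlt; exact hlt
        have hge : r1 ≤ r := hmin m r hr hcase
        have : r1 = r := by omega
        subst this
        have hm0 : m0 = m := hW w m0 m (by rw [hr1, hr]) (wAcc_of_rank hr1)
        subst hm0
        rcases hcause with hnacc | ⟨w', hp', hpref⟩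
        · exact absurd hacc hnacc
        · exact ⟨w', hp', hpref⟩
    obtain ⟨w'', hw'', hpref⟩ := key
    obtain ⟨b, hb0, hb1, hbacc, hbmax⟩ := best_step hM t m ⟨w'', hw'', mAcc_of_mPref hpref⟩
    refine ⟨b, hb1, ?_⟩
    rcases hbmax w'' hw'' (mAcc_of_mPref hpref) with he | hp2
    · rw [← he]; exact hpref
    · exact mPref_trans hp2 hpref

theorem DA_stable (hM : J.MStrict) (hW : J.WStrict) : J.IsStable (DA J) := by
  refine ⟨DA_isMatching hM, ?_⟩
  rintro m w ⟨hacc, hwacc, hms, hws⟩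
  obtain ⟨rm, hrm⟩ := wAcc_rank hwacc
  have hpass : rm < final J w := by
    rcases hws with hsingle | ⟨m', hm', hpref⟩
    · have hnone : propc J w (final J w) = none := by
        cases hcase : propc J w (final J w) with
        | none => rfl
        | some m' => exact absurd (mem_DA.mpr hcase) (hsingle m')
      exact propc_none hnone m rm hrm
    · rw [mem_DA] at hm'
      obtain ⟨r', hr', hc', hmin⟩ := propc_some hm'
      obtain ⟨a, b, ha, hb, hab⟩ := hpref
      rw [hrm] at ha; injection ha with ha; subst ha
      rw [hr'] at hb; injection hb with hb; subst hb
      by_contra hc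
      push_neg at hc
      have := hmin m rm hrm hc
      omega
  have hinv := invB hM hW (n*n) w m rm hrm hpass hacc
  obtain ⟨w', hw', hpref'⟩ := hinv
  have hmem : (m, w') ∈ DA J := mem_DA.mpr hw'
  rcases hms with hsingle | ⟨w0, hw0, hpref0⟩
  · exact hsingle w' hmem
  · have he : ((m, w0) : Fin n × Fin n) = (m, w') :=
      (DA_isMatching hM).2.1 _ hw0 _ hmem rfl
    injection he with h1 h2
    subst h2
    exact mPref_asymm hpref0 hpref'

/-- no stable matching ever has a partner passed over in the run. -/
lemma opt_inv (hM : J.MStrict) (hW : J.WStrict) {ν : Finset (Fin n × Fin n)}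
    (hν : J.IsStable ν) (t : ℕ) :
    ∀ m w r, (m, w) ∈ ν → J.wpref w m = some r → st J t w ≤ r := by
  induction t with
  | zero => intro m w r _ _; simp [st]
  | succ t ih =>
    intro m w r hmem hr
    by_contra hlt
    push_neg at hlt
    have hle : st J t w ≤ r := ih m w r hmem hr
    have hch : st J (t+1) w ≠ st J t w := by omega
    rw [st_succ] at hch
    obtain ⟨r0, m0, hp, hw0, hcause, he⟩ := step_changed hch
    obtain ⟨r1, hr1, hc1, hmin⟩ := propc_some hp
    rw [hr1] at hw0; injection hw0 with h'; subst h'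
    have hlt' : r < r1 + 1 := by rw [st_succ, he] at hlt; exact hlt
    have hge : r1 ≤ r := hmin m r hr hle
    have : r1 = r := by omega
    subst this
    obtain rfl : m = m0 := (hW w m0 m (by rw [hr1, hr]) (wAcc_of_rank hr1)).symm
    rcases hcause with hnacc | ⟨w', hp', hpref⟩
    · exact hnacc (hν.1.1 (m, w) hmem).1
    · -- (m, w') blocks ν
      apply hν.2 m w'
      obtain ⟨rp, hrp, hcp, hminp⟩ := propc_some hp'
      refine ⟨mAcc_of_mPref hpref, wAcc_of_rank hrp, Or.inr ⟨w, hmem, hpref⟩, ?_⟩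
      by_cases hex : ∃ m'', (m'', w') ∈ ν
      · obtain ⟨m'', hm''⟩ := hex
        refine Or.inr ⟨m'', hm'', ?_⟩
        obtain ⟨r'', hr''⟩ := wAcc_rank (hν.1.1 (m'', w') hm'').2
        have hig : st J t w' ≤ r'' := ih m'' w' r'' hm'' hr''
        have hrpr : rp ≤ r'' := hminp m'' r'' hr'' hig
        have hne : m ≠ m'' := by
          intro hmm
          subst hmm
          have : ((m, w) : Fin n × Fin n) = (m, w') := hν.1.2.1 _ hmem _ hm'' rfl
          injection this with _ h2
          subst h2
          exact mPref_irrefl hpref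
        have : rp ≠ r'' := wrank_ne hW hrp hr'' hne
        exact ⟨rp, r'', hrp, hr'', by omega⟩
      · push_neg at hex
        exact Or.inl (fun m' => hex m')
  
end Invariants

section Persist
variable {J : SMInst (Fin n) (Fin n)}

lemma wPref_irrefl {w m : Fin n} (h : J.wPref w m m) : False := by
  obtain ⟨a, b, ha, hb, hab⟩ := h
  rw [ha] at hb; injection hb with h'; omega

/-- once a woman proposes to her final partner she stays there. -/
lemma persist {w m : Fin n} (hfin : propc J w (final J w) = some m)
    {t : ℕ} (h : propc J w (st J t w) = some m) :
    ∀ t' ≥ t, propc J w (st J t' w) = some m := by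
  intro t' ht'
  induction t' with
  | zero =>
    have : t = 0 := Nat.le_zero.mp ht'
    subst this; exact h
  | succ t' ih =>
    by_cases hc : t ≤ t'
    · have hprev := ih hc
      by_cases hrej : Rej J (st J t') w
      · obtain ⟨r, m0, hp, hw0, _, he⟩ := step_spec hrej
        rw [hprev] at hp; injection hp with hp
        rw [← hp] at hw0
        obtain ⟨rf, hrf, hcf, _⟩ := propc_some hfin
        rw [hrf] at hw0; injection hw0 with h'
        have h1 : st J (t'+1) w ≤ final J w := st_le_final J _ w
        rw [st_succ, he] at h1
        omega
      · rw [st_succ, step_eq_of_not hrej]; exact hprev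
    · have : t = t' + 1 := by omega
      subst this; exact h

end Persist

/-- first time a woman's proposal equals her final proposal. -/
noncomputable def arr (J : SMInst (Fin n) (Fin n)) (w : Fin n) : ℕ :=
  @Nat.find (fun t => propc J w (st J t w) = propc J w (final J w))
    (fun _ => by infer_instance) ⟨n * n, rfl⟩

lemma arr_spec (J : SMInst (Fin n) (Fin n)) (w : Fin n) :
    propc J w (st J (arr J w) w) = propc J w (final J w) := by
  unfold arr
  exact @Nat.find_spec (fun t => propc J w (st J t w) = propc J w (final J w))
    (fun _ => by infer_instance) ⟨n * n, rfl⟩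

lemma arr_min (J : SMInst (Fin n) (Fin n)) (w : Fin n) {t : ℕ} (h : t < arr J w) :
    propc J w (st J t w) ≠ propc J w (final J w) := by
  unfold arr at h
  exact @Nat.find_min (fun t => propc J w (st J t w) = propc J w (final J w))
    (fun _ => by infer_instance) ⟨n * n, rfl⟩ t h

open Classical in
/-- choice of a "better DA-partner" used in the blocking lemma. -/
noncomputable def pick (J : SMInst (Fin n) (Fin n)) (ν : Finset (Fin n × Fin n))
    (Wp : Finset (Fin n)) (w : Fin n) : Fin n :=
  if h : ∃ m w2, (m, w) ∈ ν ∧ (m, w2) ∈ DA J ∧ J.mPref m w2 w ∧ w2 ∈ Wp then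
    h.choose_spec.choose
  else w

lemma pick_spec {J : SMInst (Fin n) (Fin n)} {ν : Finset (Fin n × Fin n)}
    {Wp : Finset (Fin n)} {w : Fin n}
    (h : ∃ m w2, (m, w) ∈ ν ∧ (m, w2) ∈ DA J ∧ J.mPref m w2 w ∧ w2 ∈ Wp) :
    ∃ m, (m, w) ∈ ν ∧ (m, pick J ν Wp w) ∈ DA J ∧ J.mPref m (pick J ν Wp w) w ∧
      pick J ν Wp w ∈ Wp := by
  classical
  unfold pick
  rw [dif_pos h]
  exact ⟨h.choose, h.choose_spec.choose_spec⟩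

section Blocking
variable {J : SMInst (Fin n) (Fin n)}

/-- The Blocking Lemma (women-proposing version, tailored): if `ν` is a matching
of `J` and some woman strictly prefers `ν` to the DA matching, then `ν` is
blocked by a pair whose woman does not prefer `ν` to the DA matching. -/
theorem blocking (hM : J.MStrict) (hW : J.WStrict) {ν : Finset (Fin n × Fin n)}
    (hν : J.IsMatching ν) {w0 : Fin n}
    (hw0 : ∃ m, (m, w0) ∈ ν ∧
      (wSingle (DA J) w0 ∨ ∃ m', (m', w0) ∈ DA J ∧ J.wPref w0 m m')) :
    ∃ mb b, J.Blocks ν mb b ∧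
      ¬ ∃ m2, (m2, b) ∈ ν ∧
        (wSingle (DA J) b ∨ ∃ m', (m', b) ∈ DA J ∧ J.wPref b m2 m') := by
  classical
  have hμ : J.IsMatching (DA J) := DA_isMatching hM
  -- uniqueness helpers
  have hν1 : ∀ {m w w'}, (m, w) ∈ ν → (m, w') ∈ ν → w = w' := by
    intro m w w' h h'
    have := hν.2.1 _ h _ h' rfl
    injection this with _ h2
  have hν2 : ∀ {m m' w}, (m, w) ∈ ν → (m', w) ∈ ν → m = m' := by
    intro m m' w h h'
    have := hν.2.2 _ h _ h' rfl
    injection this with h1 _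
  have hμ1 : ∀ {m w w'}, (m, w) ∈ DA J → (m, w') ∈ DA J → w = w' := by
    intro m w w' h h'
    have := hμ.2.1 _ h _ h' rfl
    injection this with _ h2
  have hμ2 : ∀ {m m' w}, (m, w) ∈ DA J → (m', w) ∈ DA J → m = m' := by
    intro m m' w h h'
    have := hμ.2.2 _ h _ h' rfl
    injection this with h1 _
  set Wp : Finset (Fin n) := univ.filter (fun w => ∃ m, (m, w) ∈ ν ∧
    (wSingle (DA J) w ∨ ∃ m', (m', w) ∈ DA J ∧ J.wPref w m m')) with hWpdef
  have mem_Wp : ∀ w, w ∈ Wp ↔ ∃ m, (m, w) ∈ ν ∧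
      (wSingle (DA J) w ∨ ∃ m', (m', w) ∈ DA J ∧ J.wPref w m m') := by
    intro w; simp [hWpdef]
  suffices h : ∃ mb b, J.Blocks ν mb b ∧ b ∉ Wp by
    obtain ⟨mb, b, hb, hbn⟩ := h
    exact ⟨mb, b, hb, fun hx => hbn ((mem_Wp b).2 hx)⟩
  -- every ν-partner of a Wp-woman is DA-matched to someone he strictly prefers
  have step2 : ∀ m w, (m, w) ∈ ν → w ∈ Wp →
      ∃ w2, (m, w2) ∈ DA J ∧ J.mPref m w2 w := by
    intro m w hmw hwWp
    have hnb := (DA_stable hM hW).2 m w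
    obtain ⟨m1, hm1, hcond⟩ := (mem_Wp w).1 hwWp
    have hme : m1 = m := hν2 hm1 hmw
    rw [hme] at hcond
    by_contra hno; push_neg at hno
    apply hnb
    refine ⟨(hν.1 _ hmw).1, (hν.1 _ hmw).2, ?_, hcond⟩
    by_cases hsing : ∃ w2, (m, w2) ∈ DA J
    · obtain ⟨w2, hw2⟩ := hsing
      refine Or.inr ⟨w2, hw2, ?_⟩
      have hnp := hno w2 hw2
      have hw2w : w2 ≠ w := by
        intro he; rw [he] at hw2
        rcases hcond with hsg | ⟨m', hm', hpref⟩
        · exact hsg m hw2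
        · have : m' = m := hμ2 hm' hw2
          rw [this] at hpref
          exact wPref_irrefl hpref
      obtain ⟨c, hc⟩ := mAcc_rank (hν.1 _ hmw).1
      obtain ⟨c2, hc2⟩ := mAcc_rank (hμ.1 _ hw2).1
      have hne : c2 ≠ c := mrank_ne hM hc2 hc hw2w
      have : ¬ c2 < c := fun hlt => hnp ⟨c2, c, hc2, hc, hlt⟩
      exact ⟨c, c2, hc, hc2, by omega⟩
    · push_neg at hsing
      exact Or.inl (fun w2 => hsing w2)
  by_cases hcase : ∃ m w w2, (m, w) ∈ ν ∧ w ∈ Wp ∧ (m, w2) ∈ DA J ∧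
      J.mPref m w2 w ∧ w2 ∉ Wp
  · -- Case 1
    obtain ⟨m, w, w2, hmw, hwWp, hmw2, hpref, hw2n⟩ := hcase
    refine ⟨m, w2, ⟨(hμ.1 _ hmw2).1, (hμ.1 _ hmw2).2, Or.inr ⟨w, hmw, hpref⟩, ?_⟩, hw2n⟩
    by_cases hex : ∃ m0, (m0, w2) ∈ ν
    · obtain ⟨m0, hm0⟩ := hex
      refine Or.inr ⟨m0, hm0, ?_⟩
      have hnot : ¬ (wSingle (DA J) w2 ∨ ∃ m', (m', w2) ∈ DA J ∧ J.wPref w2 m0 m') := by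
        intro hcond
        exact hw2n ((mem_Wp w2).2 ⟨m0, hm0, hcond⟩)
      push_neg at hnot
      obtain ⟨-, hall⟩ := hnot
      have hnp : ¬ J.wPref w2 m0 m := hall m hmw2
      obtain ⟨d, hd⟩ := wAcc_rank (hμ.1 _ hmw2).2
      obtain ⟨d0, hd0⟩ := wAcc_rank (hν.1 _ hm0).2
      have hm0m : m0 ≠ m := by
        intro he; rw [he] at hm0
        have : w2 = w := hν1 hm0 hmw
        rw [this] at hw2n
        exact hw2n hwWp
      have hne : d0 ≠ d := wrank_ne hW hd0 hd hm0m
      have : ¬ d0 < d := fun hlt => hnp ⟨d0, d, hd0, hd, hlt⟩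
      exact ⟨d, d0, hd, hd0, by omega⟩
    · push_neg at hex
      exact Or.inl (fun m' => hex m')
  · -- Case 2
    push_neg at hcase
    have hf0 : ∀ w, w ∈ Wp → ∃ m w2, (m, w) ∈ ν ∧ (m, w2) ∈ DA J ∧
        J.mPref m w2 w ∧ w2 ∈ Wp := by
      intro w hw
      obtain ⟨m, hm, -⟩ := (mem_Wp w).1 hw
      obtain ⟨w2, hw2, hpref⟩ := step2 m w hm hw
      exact ⟨m, w2, hm, hw2, hpref, hcase m w w2 hm hw hw2 hpref⟩
    set f : Fin n → Fin n := pick J ν Wp with hfdef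
    have hf : ∀ w ∈ Wp, ∃ m, (m, w) ∈ ν ∧ (m, f w) ∈ DA J ∧
        J.mPref m (f w) w ∧ f w ∈ Wp := fun w hw => pick_spec (hf0 w hw)
    -- f is injective on Wp, hence surjective onto Wp
    have hinj : ∀ u ∈ Wp, ∀ v ∈ Wp, f u = f v → u = v := by
      intro u hu v hv he
      obtain ⟨mu, hmu, hmu2, -, -⟩ := hf u hu
      obtain ⟨mv, hmv, hmv2, -, -⟩ := hf v hv
      rw [he] at hmu2
      have : mu = mv := hμ2 hmu2 hmv2
      rw [this] at hmu
      exact hν1 hmu hmv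
    have hsurj : ∀ w ∈ Wp, ∃ u, ∃ hu : u ∈ Wp, w = f u := by
      apply Finset.surj_on_of_inj_on_of_card_le (fun a _ => f a)
      · intro a ha; exact (hf a ha).choose_spec.2.2.2
      · intro a b ha hb he; exact hinj a ha b hb he
      · exact le_rfl
    -- the key consequence: every Wp-woman is DA-matched to a man whose
    -- ν-partner is in Wp and who strictly prefers her to that partner
    have Psurj : ∀ w ∈ Wp, ∃ m u, (m, w) ∈ DA J ∧ (m, u) ∈ ν ∧ u ∈ Wp ∧
        J.mPref m w u := by
      intro w hw
      obtain ⟨u, hu, he⟩ := hsurj w hw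
      obtain ⟨m, hm1, hm2, hm3, -⟩ := hf u hu
      rw [← he] at hm2 hm3
      exact ⟨m, u, hm2, hm1, hu, hm3⟩
    have hmatched : ∀ w ∈ Wp, ∃ m, (m, w) ∈ DA J := by
      intro w hw
      obtain ⟨m, u, h1, -, -, -⟩ := Psurj w hw
      exact ⟨m, h1⟩
    have hWpne : Wp.Nonempty := ⟨w0, (mem_Wp w0).2 hw0⟩
    obtain ⟨w1, hw1Wp, hw1max⟩ := Finset.exists_max_image Wp (arr J) hWpne
    obtain ⟨mb, u1, hmbw1, hmbu1, hu1Wp, hprefmb⟩ := Psurj w1 hw1Wp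
    have hu1w1 : u1 ≠ w1 := by
      intro he; rw [he] at hprefmb; exact mPref_irrefl hprefmb
    obtain ⟨R', hR'⟩ := wAcc_rank (hν.1 _ hmbu1).2
    obtain ⟨m2, hm2⟩ := hmatched u1 hu1Wp
    have hm2mb : m2 ≠ mb := by
      intro he; rw [he] at hm2
      exact hu1w1 (hμ1 hm2 hmbw1)
    -- u1 strictly prefers mb to her DA-partner m2
    have hprefu : J.wPref u1 mb m2 := by
      obtain ⟨mn, hmn, hcond⟩ := (mem_Wp u1).1 hu1Wp
      have : mn = mb := hν2 hmn hmbu1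
      rw [this] at hcond
      rcases hcond with hsg | ⟨m', hm', hpref⟩
      · exact absurd hm2 (hsg m2)
      · have : m' = m2 := hμ2 hm' hm2
        rw [this] at hpref
        exact hpref
    -- u1's run passed mb
    have hfinpass : R' < final J u1 := by
      by_contra hcon; push_neg at hcon
      have hda : propc J u1 (final J u1) = some m2 := mem_DA.mp hm2
      obtain ⟨c2, hc2, hcc, hmin⟩ := propc_some hda
      have := hmin mb R' hR' hcon
      obtain ⟨a, b, ha, hb, hab⟩ := hprefu
      rw [hR'] at ha; injection ha with ha
      rw [hc2] at hb; injection hb with hb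
      omega
    have hT : ∃ t, R' < st J t u1 := ⟨n * n, hfinpass⟩
    have h0 : ¬ R' < st J 0 u1 := by simp [st]
    obtain ⟨ta, hta⟩ : ∃ ta, Nat.find hT = ta + 1 :=
      Nat.exists_eq_succ_of_ne_zero (by
        intro hz
        exact h0 (by rw [← hz]; exact Nat.find_spec hT))
    have ha1 : st J ta u1 ≤ R' := by
      have := Nat.find_min hT (by omega : ta < Nat.find hT)
      omega
    have ha2 : R' < st J (ta + 1) u1 := by
      rw [← hta]; exact Nat.find_spec hT
    have hch : step J (st J ta) u1 ≠ st J ta u1 := by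
      rw [← st_succ]; omega
    obtain ⟨r0, m0, hp, hw0', hcause, he⟩ := step_changed hch
    obtain ⟨r1, hr1, hc1, hmin⟩ := propc_some hp
    rw [hr1] at hw0'; injection hw0' with h'
    rw [← h'] at he
    have hr1R : r1 ≤ R' := hmin mb R' hR' ha1
    have hR'r1 : R' < r1 + 1 := by
      rw [st_succ, he] at ha2; exact ha2
    have hrr : r1 = R' := by omega
    rw [hrr] at hr1
    have hm0mb : m0 = mb := hW u1 m0 mb (by rw [hr1, hR']) (wAcc_of_rank hr1)
    rw [hm0mb] at hp hcause
    rcases hcause with hnacc | ⟨wx, hwx, hprefx⟩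
    · exact absurd (hν.1 _ hmbu1).1 hnacc
    -- ta is before u1's arrival, hence before tstar
    have hta_arr : ta < arr J u1 := by
      by_contra hcon; push_neg at hcon
      have hfin2 : propc J u1 (final J u1) = some m2 := mem_DA.mp hm2
      have hs : propc J u1 (st J (arr J u1) u1) = some m2 :=
        (arr_spec J u1).trans hfin2
      have := persist hfin2 hs ta hcon
      rw [hp] at this
      injection this with h''
      exact hm2mb h''.symm
    have htastar : ta < arr J w1 := lt_of_lt_of_le hta_arr (hw1max u1 hu1Wp)
    -- propagate a better-than-u1 proposer of mb forward
    have hProp : ∀ k, ∃ wb, propc J wb (st J (ta + k) wb) = some mb ∧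
        J.mAcc mb wb ∧ J.mPref mb wb u1 := by
      intro k; induction k with
      | zero => exact ⟨wx, hwx, mAcc_of_mPref hprefx, hprefx⟩
      | succ k ih =>
        obtain ⟨wb, h1, h2, h3⟩ := ih
        obtain ⟨b, hb0, hb1, hbacc, hbmax⟩ := best_step hM (ta + k) mb ⟨wb, h1, h2⟩
        refine ⟨b, by rw [show ta + (k+1) = (ta+k)+1 from rfl]; exact hb1, hbacc, ?_⟩
        rcases hbmax wb h1 h2 with he' | hpp
        · rw [he'] at h3; exact h3
        · exact mPref_trans hpp h3
    obtain ⟨d, hd⟩ : ∃ d, arr J w1 = ta + (d + 1) :=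
      ⟨arr J w1 - ta - 1, by omega⟩
    obtain ⟨wb, h1, h2, h3⟩ := hProp d
    obtain ⟨b, hb0, hb1, hbacc, hbmax⟩ := best_step hM (ta + d) mb ⟨wb, h1, h2⟩
    have hbpref_u1 : J.mPref mb b u1 := by
      rcases hbmax wb h1 h2 with he' | hpp
      · rw [he'] at h3; exact h3
      · exact mPref_trans hpp h3
    have hbstar : propc J b (st J (arr J w1) b) = some mb := by
      rw [hd, show ta + (d+1) = (ta+d)+1 from rfl]; exact hb1
    have hbw1 : b ≠ w1 := by
      intro he'
      have hlt : ta + d < arr J w1 := by omega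
      have hb0' : propc J w1 (st J (ta + d) w1) = some mb := by
        rw [← he']; exact hb0
      exact arr_min J w1 hlt (hb0'.trans (mem_DA.mp hmbw1).symm)
    have hbWp : b ∉ Wp := by
      intro hbWp
      obtain ⟨mb2, hmb2⟩ := hmatched b hbWp
      have harrb : arr J b ≤ arr J w1 := hw1max b hbWp
      have hfinb : propc J b (final J b) = some mb2 := mem_DA.mp hmb2
      have hsb : propc J b (st J (arr J b) b) = some mb2 :=
        (arr_spec J b).trans hfinb
      have hpersist := persist hfinb hsb (arr J w1) harrb
      rw [hbstar] at hpersist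
      injection hpersist with h''
      rw [← h''] at hmb2
      exact hbw1 (hμ1 hmb2 hmbw1)
    obtain ⟨Rb, hRb, hcb, hminb⟩ := propc_some hb0
    refine ⟨mb, b, ⟨hbacc, wAcc_of_rank hRb, Or.inr ⟨u1, hmbu1, hbpref_u1⟩, ?_⟩, hbWp⟩
    by_cases hex : ∃ m0', (m0', b) ∈ ν
    · obtain ⟨m0', hm0'⟩ := hex
      refine Or.inr ⟨m0', hm0', ?_⟩
      have hnot : ¬ (wSingle (DA J) b ∨ ∃ m', (m', b) ∈ DA J ∧ J.wPref b m0' m') := by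
        intro hcond
        exact hbWp ((mem_Wp b).2 ⟨m0', hm0', hcond⟩)
      push_neg at hnot
      obtain ⟨hnsing, hall⟩ := hnot
      have hexb : ∃ mdb, (mdb, b) ∈ DA J := by
        by_contra hc; push_neg at hc
        exact hnsing (fun m' => hc m')
      obtain ⟨mdb, hmdb⟩ := hexb
      have hnp : ¬ J.wPref b m0' mdb := hall mdb hmdb
      obtain ⟨a0, ha0⟩ := wAcc_rank (hν.1 _ hm0').2
      obtain ⟨cd, hcd⟩ := wAcc_rank (hμ.1 _ hmdb).2
      have hmdbmb : mdb ≠ mb := by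
        intro he'; rw [he'] at hmdb
        exact hbw1 (hμ1 hmdb hmbw1)
      have hfinb2 : propc J b (final J b) = some mdb := mem_DA.mp hmdb
      obtain ⟨cd', hcd', hccd, hmind⟩ := propc_some hfinb2
      rw [hcd] at hcd'; injection hcd' with h''
      rw [← h''] at hccd
      have hstle : st J (ta + d) b ≤ final J b := st_le_final J _ b
      have hRbcd : Rb ≤ cd := hminb mdb cd hcd (le_trans hstle hccd)
      have hRbne : Rb ≠ cd := wrank_ne hW hRb hcd (fun he' => hmdbmb (he'.symm))
      have hcda : cd ≤ a0 := by
        by_contra hcon; push_neg at hcon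
        exact hnp ⟨a0, cd, ha0, hcd, hcon⟩
      exact ⟨Rb, a0, hRb, ha0, by omega⟩
    · push_neg at hex
      exact Or.inl (fun m' => hex m')

end Blocking

section Instances

/-- Tie-breaking of the men's lists (women's lists unchanged). -/
def tb (I : SMInst (Fin n) (Fin n)) : SMInst (Fin n) (Fin n) where
  mpref := fun m w => (I.mpref m w).map (fun r => r * n + w.val)
  wpref := I.wpref

lemma tb_mAcc (I : SMInst (Fin n) (Fin n)) (m w : Fin n) :
    (tb I).mAcc m w ↔ I.mAcc m w := by
  simp [SMInst.mAcc, tb]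

lemma tb_MStrict (I : SMInst (Fin n) (Fin n)) : (tb I).MStrict := by
  intro m w w' he hacc
  have hsome : (I.mpref m w).isSome := (tb_mAcc I m w).1 hacc
  obtain ⟨r, hr⟩ := Option.isSome_iff_exists.mp hsome
  cases hr' : I.mpref m w' with
  | none =>
    exfalso
    simp only [tb, hr, hr', Option.map_some, Option.map_none] at he
    exact Option.some_ne_none _ he
  | some r' =>
    simp only [tb, hr, hr', Option.map_some] at he
    injection he with he
    have e1 : (r * n + (w : ℕ)) % n = (w : ℕ) := by
      rw [Nat.add_comm, Nat.add_mul_mod_self_right]; exact Nat.mod_eq_of_lt w.isLt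
    have e2 : (r' * n + (w' : ℕ)) % n = (w' : ℕ) := by
      rw [Nat.add_comm, Nat.add_mul_mod_self_right]; exact Nat.mod_eq_of_lt w'.isLt
    apply Fin.ext
    rw [← e1, ← e2, he]

lemma tb_WStrict (I : SMInst (Fin n) (Fin n)) (h : I.WStrict) : (tb I).WStrict := h

lemma tb_mPref (I : SMInst (Fin n) (Fin n)) {m w w' : Fin n}
    (h : I.mPref m w w') : (tb I).mPref m w w' := by
  obtain ⟨r, r', h1, h2, hlt⟩ := h
  refine ⟨r * n + w.val, r' * n + w'.val, by simp [tb, h1], by simp [tb, h2], ?_⟩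
  have hwn : (w : ℕ) < n := w.isLt
  have hstep1 : r * n + (w : ℕ) < (r + 1) * n := by rw [Nat.succ_mul]; omega
  have hstep2 : (r + 1) * n ≤ r' * n := Nat.mul_le_mul_right n hlt
  omega

lemma tb_blocks (I : SMInst (Fin n) (Fin n)) {M : Finset (Fin n × Fin n)} {m w : Fin n}
    (h : I.Blocks M m w) : (tb I).Blocks M m w := by
  obtain ⟨h1, h2, h3, h4⟩ := h
  refine ⟨(tb_mAcc I m w).2 h1, h2, ?_, h4⟩
  rcases h3 with hs | ⟨w', hw', hp⟩
  · exact Or.inl hs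
  · exact Or.inr ⟨w', hw', tb_mPref I hp⟩

lemma tb_stable (I : SMInst (Fin n) (Fin n)) {M : Finset (Fin n × Fin n)}
    (h : (tb I).IsStable M) : I.IsStable M := by
  refine ⟨⟨?_, h.1.2.1, h.1.2.2⟩, ?_⟩
  · intro p hp
    exact ⟨(tb_mAcc I p.1 p.2).1 (h.1.1 p hp).1, (h.1.1 p hp).2⟩
  · intro m w hb
    exact h.2 m w (tb_blocks I hb)

/-- any stable matching is a 2-approximation to any matching. -/
lemma approx {I : SMInst (Fin n) (Fin n)} {M Mopt : Finset (Fin n × Fin n)}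
    (hM : I.IsStable M) (ho : I.IsMatching Mopt) : Mopt.card ≤ 2 * M.card := by
  classical
  have key : ∀ p ∈ Mopt, ∃ q ∈ M, q.1 = p.1 ∨ q.2 = p.2 := by
    rintro ⟨m, w⟩ hp
    by_contra hc; push_neg at hc
    apply hM.2 m w
    refine ⟨(ho.1 _ hp).1, (ho.1 _ hp).2, Or.inl ?_, Or.inl ?_⟩
    · intro w' hw'; exact (hc _ hw').1 rfl
    · intro m' hm'; exact (hc _ hm').2 rfl
  set f : (Fin n × Fin n) → (Fin n × Fin n) :=
    fun p => if h : ∃ q ∈ M, q.1 = p.1 ∨ q.2 = p.2 then h.choose else p with hfdef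
  have hfspec : ∀ p ∈ Mopt, f p ∈ M ∧ ((f p).1 = p.1 ∨ (f p).2 = p.2) := by
    intro p hp
    have hex := key p hp
    simp only [hfdef]
    rw [dif_pos hex]
    exact hex.choose_spec
  have fiber : ∀ q ∈ Mopt.image f, (Mopt.filter (fun p => f p = q)).card ≤ 2 := by
    intro q _
    have hsub : Mopt.filter (fun p => f p = q) ⊆
        (Mopt.filter (fun p => p.1 = q.1)) ∪ (Mopt.filter (fun p => p.2 = q.2)) := by
      intro p hp
      rw [mem_filter] at hp
      obtain ⟨hp1, hp2⟩ := hp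
      rcases (hfspec p hp1).2 with h | h
      · exact mem_union_left _ (mem_filter.mpr ⟨hp1, by rw [← h, hp2]⟩)
      · exact mem_union_right _ (mem_filter.mpr ⟨hp1, by rw [← h, hp2]⟩)
    have c1 : (Mopt.filter (fun p => p.1 = q.1)).card ≤ 1 := by
      apply Finset.card_le_one.mpr
      intro a ha b hb
      rw [mem_filter] at ha hb
      exact ho.2.1 _ ha.1 _ hb.1 (ha.2.trans hb.2.symm)
    have c2 : (Mopt.filter (fun p => p.2 = q.2)).card ≤ 1 := by
      apply Finset.card_le_one.mpr
      intro a ha b hb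
      rw [mem_filter] at ha hb
      exact ho.2.2 _ ha.1 _ hb.1 (ha.2.trans hb.2.symm)
    calc (Mopt.filter (fun p => f p = q)).card
        ≤ ((Mopt.filter (fun p => p.1 = q.1)) ∪ (Mopt.filter (fun p => p.2 = q.2))).card :=
          card_le_card hsub
      _ ≤ _ := card_union_le _ _
      _ ≤ 2 := by omega
  calc Mopt.card = ∑ q ∈ Mopt.image f, (Mopt.filter (fun p => f p = q)).card :=
        Finset.card_eq_sum_card_image f Mopt
    _ ≤ ∑ _q ∈ Mopt.image f, 2 := Finset.sum_le_sum fiber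
    _ = 2 * (Mopt.image f).card := by rw [Finset.sum_const, smul_eq_mul, mul_comm]
    _ ≤ 2 * M.card := by
        apply Nat.mul_le_mul_left
        apply Finset.card_le_card
        intro q hq
        obtain ⟨p, hp, he⟩ := Finset.mem_image.mp hq
        rw [← he]; exact (hfspec p hp).1

end Instances

end DAproof


open DAproof in
/-- MAX SMTI-1TM admits a woman-strategy-proof 2-approximate-stable mechanism. -/
theorem woman_sp_two_approx_stable_mechanism_SMTI1TM :
    ∃ S : ∀ n : ℕ, SMInst (Fin n) (Fin n) → Finset (Fin n × Fin n),
      (∀ (n : ℕ) (I : SMInst (Fin n) (Fin n)), I.OneTM →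
          I.IsStable (S n I) ∧
          ∀ Mopt : Finset (Fin n × Fin n), I.IsStable Mopt →
            Mopt.card ≤ 2 * (S n I).card) ∧
      ¬ ∃ (n : ℕ) (I I' : SMInst (Fin n) (Fin n)) (w : Fin n),
          I.OneTM ∧ I'.OneTM ∧ SMInst.wDiffOnly I I' w ∧
          I.wPrefMatching w (S n I') (S n I) := by
  classical
  refine ⟨fun n I => DA (tb I), ?_, ?_⟩
  · intro n I hI
    have hstab : (tb I).IsStable (DA (tb I)) :=
      DA_stable (tb_MStrict I) (tb_WStrict I hI)
    have hstabI : I.IsStable (DA (tb I)) := tb_stable I hstab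
    exact ⟨hstabI, fun Mopt hMopt => approx hstabI hMopt.1⟩
  · rintro ⟨n, I, I', w0, hI, hI', ⟨hmp, hwp⟩, hpref⟩
    have hMJ : (tb I).MStrict := tb_MStrict I
    have hWJ : (tb I).WStrict := tb_WStrict I hI
    have hMJ' : (tb I').MStrict := tb_MStrict I'
    have hWJ' : (tb I').WStrict := tb_WStrict I' hI'
    have hmprefJ : (tb I).mpref = (tb I').mpref := by
      show (fun m w => (I.mpref m w).map _) = (fun m w => (I'.mpref m w).map _)
      rw [hmp]
    obtain ⟨m, hmem, hacc, hcond⟩ := hpref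
    have hν' : (tb I').IsMatching (DA (tb I')) := DA_isMatching hMJ'
    -- the manipulated outcome is also a matching with respect to (tb I)
    have hν : (tb I).IsMatching (DA (tb I')) := by
      refine ⟨?_, hν'.2.1, hν'.2.2⟩
      rintro ⟨m1, w1⟩ hp
      have h1 := hν'.1 _ hp
      constructor
      · show ((tb I).mpref m1 w1).isSome
        rw [hmprefJ]; exact h1.1
      · by_cases hww : w1 = w0
        · subst hww
          have hm1 : m1 = m := by
            have := hν'.2.2 _ hp _ hmem rfl
            injection this with h2 _
          rw [hm1]
          exact hacc
        · show ((tb I).wpref w1 m1).isSome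
          have : (tb I).wpref w1 = (tb I').wpref w1 := hwp w1 hww
          rw [this]; exact h1.2
    have hw0J : ∃ m', (m', w0) ∈ DA (tb I') ∧
        (SMInst.wSingle (DA (tb I)) w0 ∨
          ∃ m'', (m'', w0) ∈ DA (tb I) ∧ (tb I).wPref w0 m' m'') :=
      ⟨m, hmem, hcond⟩
    obtain ⟨mb, b, hblocks, hbn⟩ := blocking hMJ hWJ hν hw0J
    have hbw0 : b ≠ w0 := by
      intro he; subst he
      exact hbn ⟨m, hmem, hcond⟩
    -- the blocking pair also blocks with respect to (tb I'), contradicting stability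
    apply (DA_stable hMJ' hWJ').2 mb b
    obtain ⟨h1, h2, h3, h4⟩ := hblocks
    have hbpref : (tb I).wpref b = (tb I').wpref b := hwp b hbw0
    refine ⟨?_, ?_, ?_, ?_⟩
    · show ((tb I').mpref mb b).isSome
      rw [← hmprefJ]; exact h1
    · show ((tb I').wpref b mb).isSome
      rw [← hbpref]; exact h2
    · rcases h3 with hs | ⟨w', hw', hp⟩
      · exact Or.inl hs
      · refine Or.inr ⟨w', hw', ?_⟩
        obtain ⟨r, r', e1, e2, hlt⟩ := hp
        rw [hmprefJ] at e1 e2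
        exact ⟨r, r', e1, e2, hlt⟩
    · rcases h4 with hs | ⟨m', hm', hp⟩
      · exact Or.inl hs
      · refine Or.inr ⟨m', hm', ?_⟩
        obtain ⟨r, r', e1, e2, hlt⟩ := hp
        rw [hbpref] at e1 e2
        exact ⟨r, r', e1, e2, hlt⟩
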